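/- arXiv:1303.0374 — 5 statements merged into one kernel-verified Lean document; each statement's English description precedes it below -/
import Mathlib

section
/- Let X be a compact metric space, f : X → X a continuous minimal map, and H the homeo-part of (X, f). If a subset H' ⊆ X satisfies f(H') = H' = f⁻¹(H') and every point of H' has exactly one f-preimage in X, then H' ⊆ H; that is, H is the maximal subset of X which is fully invariant and on which all f-preimages are unique. -/
open Set Topology

/-- The homeo-part of a dynamical system `(X, f)`: the set of points `x₀` whose full orbit
`{y | ∃ i j ≥ 0, f^[i] y = f^[j] x₀}` has the form `{…, x₋₁, x₀, x₁, …}` for a two-sided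
sequence with `f(xₙ) = xₙ₊₁`. -/
def homeoPart {X : Type*} (f : X → X) : Set X :=
  {x₀ | ∃ u : ℤ → X, u 0 = x₀ ∧ (∀ n : ℤ, f (u n) = u (n + 1)) ∧
    {y | ∃ i j : ℕ, f^[i] y = f^[j] x₀} = Set.range u}

/-- The homeo-part of a continuous minimal map `f` of a compact metric space
is the maximal fully invariant subset on which all `f`-preimages are unique: any `H'` with
`f(H') = H' = f⁻¹(H')` all of whose points have exactly one `f`-preimage in `X` is contained
in the homeo-part. -/
theorem homeoPart_maximal
    {X : Type*} [MetricSpace X] [CompactSpace X]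
    (f : X → X) (hf : Continuous f)
    (hmin : ∀ x : X, Dense (Set.range fun n => f^[n] x))
    (H' : Set X) (himg : f '' H' = H') (hpreim : f ⁻¹' H' = H')
    (huniq : ∀ x ∈ H', ∃! y : X, f y = x) :
    H' ⊆ homeoPart f := by
  classical
  intro x₀ hx₀
  -- a choice of inverse on H'
  set g : X → X := fun x => if h : x ∈ H' then (huniq x h).choose else x₀ with hgdef
  have hg1 : ∀ x ∈ H', f (g x) = x := by
    intro x hx
    simp only [hgdef, dif_pos hx]
    exact (huniq x hx).choose_spec.1
  have hg2 : ∀ x ∈ H', g x ∈ H' := by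
    intro x hx
    have h1 : f (g x) = x := hg1 x hx
    have h2 : g x ∈ f ⁻¹' H' := by simp [Set.mem_preimage, h1, hx]
    rwa [hpreim] at h2
  have hgk : ∀ k : ℕ, g^[k] x₀ ∈ H' := by
    intro k; induction k with
    | zero => simpa using hx₀
    | succ k ih => rw [Function.iterate_succ_apply']; exact hg2 _ ih
  have hfH : ∀ x ∈ H', f x ∈ H' := by
    intro x hx
    have : f x ∈ f '' H' := ⟨x, hx, rfl⟩
    rwa [himg] at this
  have hfk : ∀ k : ℕ, f^[k] x₀ ∈ H' := by
    intro k; induction k with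
    | zero => simpa using hx₀
    | succ k ih => rw [Function.iterate_succ_apply']; exact hfH _ ih
  set u : ℤ → X := fun n => if 0 ≤ n then f^[n.toNat] x₀ else g^[(-n).toNat] x₀ with hu
  have hu0 : u 0 = x₀ := by simp [hu]
  have hmem : ∀ n : ℤ, u n ∈ H' := by
    intro n
    by_cases h : 0 ≤ n
    · simp only [hu, if_pos h]; exact hfk _
    · simp only [hu, if_neg h]; exact hgk _
  have hstep : ∀ n : ℤ, f (u n) = u (n + 1) := by
    intro n
    rcases lt_trichotomy n (-1) with h | h | h
    · have h1 : ¬ (0 : ℤ) ≤ n := by omega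
      have h2 : ¬ (0 : ℤ) ≤ n + 1 := by omega
      have hk : (-n).toNat = (-(n + 1)).toNat + 1 := by omega
      simp only [hu, if_neg h1, if_neg h2, hk, Function.iterate_succ_apply']
      exact hg1 _ (hgk _)
    · subst h
      have h1 : ¬ (0 : ℤ) ≤ -1 := by omega
      have h2 : (0 : ℤ) ≤ -1 + 1 := by omega
      have hk : ((-(-1) : ℤ)).toNat = 1 := by omega
      have hk2 : ((-1 + 1 : ℤ)).toNat = 0 := by omega
      simp only [hu, if_neg h1, if_pos h2, hk, hk2, Function.iterate_one,
        Function.iterate_zero, id]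
      exact hg1 x₀ hx₀
    · have h1 : (0 : ℤ) ≤ n := by omega
      have h2 : (0 : ℤ) ≤ n + 1 := by omega
      have hk : (n + 1).toNat = n.toNat + 1 := by omega
      simp only [hu, if_pos h1, if_pos h2, hk, Function.iterate_succ_apply']
  have hstepk : ∀ (k : ℕ) (n : ℤ), f^[k] (u n) = u (n + k) := by
    intro k
    induction k with
    | zero => intro n; simp
    | succ k ih =>
      intro n
      have : f^[k + 1] (u n) = f^[k] (f (u n)) := Function.iterate_succ_apply f k (u n)
      rw [this, hstep n, ih (n + 1)]
      congr 1
      push_cast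
      ring
  have hback : ∀ (i : ℕ) (z : X) (m : ℤ), f^[i] z = u m → z = u (m - i) := by
    intro i
    induction i with
    | zero => intro z m h; simpa using h
    | succ i ih =>
      intro z m h
      rw [Function.iterate_succ_apply'] at h
      have h1 : f (u (m - 1)) = u m := by
        have := hstep (m - 1)
        simpa using this
      have h2 : f^[i] z = u (m - 1) :=
        (huniq (u m) (hmem m)).unique h h1
      have := ih z (m - 1) h2
      rw [this]
      congr 1
      push_cast
      ring
  refine ⟨u, hu0, hstep, ?_⟩
  ext y
  constructor
  · rintro ⟨i, j, hij⟩
    have hj : f^[j] x₀ = u ((0 : ℤ) + j) := by rw [← hu0, hstepk]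
    rw [hj] at hij
    exact ⟨(0 : ℤ) + j - i, (hback i y _ hij).symm⟩
  · rintro ⟨n, rfl⟩
    by_cases h : 0 ≤ n
    · refine ⟨0, n.toNat, ?_⟩
      have : f^[n.toNat] x₀ = u ((0 : ℤ) + n.toNat) := by rw [← hu0, hstepk]
      rw [this]
      simp only [Function.iterate_zero, id]
      congr 1
      omega
    · refine ⟨(-n).toNat, 0, ?_⟩
      rw [hstepk]
      simp only [Function.iterate_zero, id]
      have hn : n + ((-n).toNat : ℤ) = 0 := by omega
      rw [hn, hu0]
end

section
/- Let X be a compact metric space, f : X → X a continuous minimal map, H the homeo-part of (X, f), and P a residual subset of X. Then there exists a set R ⊆ P ∩ H such that: (1) R is residual in X; (2) f(R) = R = f⁻¹(R); (3) f restricted to R is a bijection of R onto itself, and for every x ∈ R both the forward f-orbit of x and the backward orbit {y ∈ R : f^n(y) = x for some n ≥ 0} are dense in X. -/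
open Set Topology

set_option linter.unusedSectionVars false

section Aux
variable {X : Type*} [MetricSpace X] [CompactSpace X] {f : X → X}

/-- A nonempty closed forward-invariant set in a minimal system is everything. -/
lemma aux_closed_inv_eq_univ (hmin : ∀ x : X, Dense (Set.range fun n => f^[n] x))
    {A : Set X} (hA : IsClosed A) (hne : A.Nonempty) (hinv : ∀ x ∈ A, f x ∈ A) :
    A = univ := by
  obtain ⟨a, ha⟩ := hne
  have horb : ∀ n, f^[n] a ∈ A := by
    intro n
    induction n with
    | zero => simpa using ha
    | succ n ih => rw [Function.iterate_succ_apply']; exact hinv _ ih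
  have h1 : closure (Set.range fun n => f^[n] a) ⊆ A := by
    apply closure_minimal _ hA
    rintro y ⟨n, rfl⟩; exact horb n
  have h2 := (hmin a).closure_eq
  rw [h2] at h1
  exact (subset_univ A).antisymm h1

lemma aux_surj (hf : Continuous f)
    (hmin : ∀ x : X, Dense (Set.range fun n => f^[n] x)) [Nonempty X] :
    Function.Surjective f := by
  have : Set.range f = univ := by
    apply aux_closed_inv_eq_univ hmin (isCompact_range hf).isClosed (range_nonempty f)
    intro x _; exact mem_range_self x
  intro y
  have : y ∈ Set.range f := this ▸ mem_univ y
  exact this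

lemma aux_cover (hf : Continuous f)
    (hmin : ∀ x : X, Dense (Set.range fun n => f^[n] x))
    {U : Set X} (hU : IsOpen U) (hne : U.Nonempty) :
    ∃ N, ∀ x : X, ∃ i ≤ N, f^[i] x ∈ U := by
  have hcov : (univ : Set X) ⊆ ⋃ n : ℕ, (f^[n]) ⁻¹' U := by
    intro x _
    obtain ⟨y, ⟨n, rfl⟩, hyU⟩ := (hmin x).exists_mem_open hU hne
    exact mem_iUnion.2 ⟨n, hyU⟩
  obtain ⟨s, hs⟩ := isCompact_univ.elim_finite_subcover (fun n : ℕ => (f^[n]) ⁻¹' U)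
    (fun n => (hf.iterate n).isOpen_preimage U hU) hcov
  refine ⟨s.sup id, fun x => ?_⟩
  obtain ⟨i, his, hiU⟩ := mem_iUnion₂.1 (hs (mem_univ x))
  exact ⟨i, Finset.le_sup (f := id) his, hiU⟩

/-- Minimal maps are irreducible: no proper closed set maps onto `X`. -/
lemma aux_irred (hf : Continuous f)
    (hmin : ∀ x : X, Dense (Set.range fun n => f^[n] x)) [Nonempty X]
    {K : Set X} (hK : IsClosed K) (himg : f '' K = univ) : K = univ := by
  by_contra hKu
  have hUopen : IsOpen Kᶜ := hK.isOpen_compl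
  have hUne : Kᶜ.Nonempty := by
    rw [nonempty_compl]; exact hKu
  obtain ⟨N, hN⟩ := aux_cover hf hmin hUopen hUne
  -- K is nonempty
  have hKne : K.Nonempty := by
    have : (univ : Set X).Nonempty := univ_nonempty
    obtain ⟨x, -⟩ := this
    have : x ∈ f '' K := himg ▸ mem_univ x
    obtain ⟨y, hy, -⟩ := this
    exact ⟨y, hy⟩
  obtain ⟨x₀, hx₀⟩ := hKne
  -- build chains inside K of any length
  have hchain : ∀ n : ℕ, ∃ y, ∀ i ≤ n, f^[i] y ∈ K := by
    intro n
    induction n with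
    | zero => exact ⟨x₀, fun i hi => by interval_cases i; simpa using hx₀⟩
    | succ n ih =>
      obtain ⟨y, hy⟩ := ih
      have : y ∈ f '' K := himg ▸ mem_univ y
      obtain ⟨z, hzK, hzy⟩ := this
      refine ⟨z, fun i hi => ?_⟩
      match i with
      | 0 => simpa using hzK
      | (j+1) =>
        rw [Function.iterate_succ_apply, hzy]
        exact hy j (by omega)
  obtain ⟨y, hy⟩ := hchain N
  obtain ⟨i, hiN, hiU⟩ := hN y
  exact hiU (hy i hiN)

/-- Key consequence: for every nonempty open `U` there is a nonempty open `W`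
whose full preimage lies in `U` (and `W ⊆ f '' U`). -/
lemma aux_W (hf : Continuous f)
    (hmin : ∀ x : X, Dense (Set.range fun n => f^[n] x)) [Nonempty X]
    {U : Set X} (hU : IsOpen U) (hne : U.Nonempty) :
    ∃ W : Set X, IsOpen W ∧ W.Nonempty ∧ f ⁻¹' W ⊆ U ∧ W ⊆ f '' U := by
  have hsurj := aux_surj hf hmin
  refine ⟨(f '' Uᶜ)ᶜ, ?_, ?_, ?_, ?_⟩
  · exact ((hU.isClosed_compl.isCompact).image hf).isClosed.isOpen_compl
  · rw [nonempty_compl]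
    intro h
    have : Uᶜ = univ := aux_irred hf hmin (isClosed_compl_iff.2 hU) h
    rw [compl_univ_iff] at this
    exact hne.ne_empty this
  · intro y hy
    by_contra hyU
    exact hy (mem_image_of_mem f hyU)
  · intro x hx
    obtain ⟨y, rfl⟩ := hsurj x
    have hyU : y ∈ U := by
      by_contra hyU
      exact hx (mem_image_of_mem f hyU)
    exact mem_image_of_mem f hyU

lemma aux_dense_preimage (hf : Continuous f)
    (hmin : ∀ x : X, Dense (Set.range fun n => f^[n] x)) [Nonempty X]
    {D : Set X} (hD : Dense D) : Dense (f ⁻¹' D) := by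
  rw [dense_iff_inter_open]
  intro U hU hne
  obtain ⟨W, hWo, hWne, hWpre, -⟩ := aux_W hf hmin hU hne
  obtain ⟨x, hxD, hxW⟩ := hD.exists_mem_open hWo hWne
  obtain ⟨y, rfl⟩ := aux_surj hf hmin x
  exact ⟨y, hWpre hxW, hxD⟩

lemma aux_preimage_residual (hf : Continuous f)
    (hmin : ∀ x : X, Dense (Set.range fun n => f^[n] x)) [Nonempty X]
    {s : Set X} (hs : s ∈ residual X) : f ⁻¹' s ∈ residual X := by
  obtain ⟨S, hSo, hSd, hSc, hSs⟩ := mem_residual_iff.1 hs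
  have hsub : (⋂ t ∈ S, f ⁻¹' t) ⊆ f ⁻¹' s := by
    intro x hx
    refine hSs ?_
    rw [mem_sInter]
    exact fun t ht => mem_iInter₂.1 hx t ht
  refine Filter.mem_of_superset ?_ hsub
  refine (countable_bInter_mem hSc).2 fun t ht => ?_
  exact residual_of_dense_open (hf.isOpen_preimage t (hSo t ht))
    (aux_dense_preimage hf hmin (hSd t ht))

/-- The image of a closed set with empty interior has empty interior. -/
lemma aux_nwd_image (hf : Continuous f)
    (hmin : ∀ x : X, Dense (Set.range fun n => f^[n] x)) [Nonempty X]
    {F : Set X} (hF : IsClosed F) (hint : interior F = ∅) :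
    interior (f '' F) = ∅ := by
  by_contra h
  obtain ⟨x, hx⟩ := nonempty_iff_ne_empty.2 h
  set W : Set X := interior (f '' F) with hWdef
  have hWo : IsOpen W := isOpen_interior
  have hWne : W.Nonempty := ⟨x, hx⟩
  have hWsub : W ⊆ f '' F := interior_subset
  by_cases hV : (f ⁻¹' W \ F).Nonempty
  · obtain ⟨W', hW'o, hW'ne, hW'pre, hW'sub⟩ :=
      aux_W hf hmin (hf.isOpen_preimage W hWo |>.sdiff hF) hV
    -- W' ⊆ W
    have h1 : W' ⊆ W := by
      intro z hz
      obtain ⟨y, hy, rfl⟩ := hW'sub hz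
      exact hy.1
    -- W' ∩ f '' F = ∅
    obtain ⟨z, hzW'⟩ := hW'ne
    have hzF : z ∈ f '' F := hWsub (h1 hzW')
    obtain ⟨y, hyF, rfl⟩ := hzF
    have : y ∈ f ⁻¹' W' := hzW'
    exact (hW'pre this).2 hyF
  · rw [not_nonempty_iff_eq_empty, diff_eq_empty] at hV
    have hpre : (f ⁻¹' W).Nonempty := by
      obtain ⟨x, hxW⟩ := hWne
      obtain ⟨y, rfl⟩ := aux_surj hf hmin x
      exact ⟨y, hxW⟩
    have : f ⁻¹' W ⊆ interior F := (hf.isOpen_preimage W hWo).subset_interior_iff.2 hV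
    rw [hint] at this
    exact hpre.ne_empty (subset_empty_iff.1 this)

lemma aux_image_residual (hf : Continuous f)
    (hmin : ∀ x : X, Dense (Set.range fun n => f^[n] x)) [Nonempty X]
    {s : Set X} (hs : s ∈ residual X) : f '' s ∈ residual X := by
  obtain ⟨S, hSo, hSd, hSc, hSs⟩ := mem_residual_iff.1 hs
  have hsurj := aux_surj hf hmin
  -- f '' s ⊇ ⋂ t ∈ S, (f '' tᶜ)ᶜ
  have hsub : (⋂ t ∈ S, (f '' tᶜ)ᶜ) ⊆ f '' s := by
    intro x hx
    obtain ⟨y, rfl⟩ := hsurj x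
    refine mem_image_of_mem f (hSs ?_)
    rw [mem_sInter]
    intro t ht
    by_contra hyt
    have : f y ∈ f '' tᶜ := mem_image_of_mem f hyt
    exact (mem_iInter₂.1 hx t ht) this
  refine Filter.mem_of_superset ?_ hsub
  refine (countable_bInter_mem hSc).2 fun t ht => ?_
  have h1 : IsClosed (tᶜ) := (hSo t ht).isClosed_compl
  have h2 : interior (tᶜ) = ∅ := by
    rw [interior_compl, (hSd t ht).closure_eq, compl_univ]
  have h3 := aux_nwd_image hf hmin h1 h2
  exact residual_of_dense_open (h1.isCompact.image hf).isClosed.isOpen_compl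
    (interior_eq_empty_iff_dense_compl.1 h3)

/-- The set of points all of whose preimages coincide is residual. -/
lemma aux_S_residual (hf : Continuous f)
    (hmin : ∀ x : X, Dense (Set.range fun n => f^[n] x)) [Nonempty X] :
    {x : X | ∀ y z, f y = x → f z = x → y = z} ∈ residual X := by
  have hsurj := aux_surj hf hmin
  set E : ℕ → Set X := fun m =>
    {x | ∃ y z, f y = x ∧ f z = x ∧ 1 / ((m : ℝ) + 1) ≤ dist y z} with hE
  -- each E m is nowhere dense
  have hEnd : ∀ m, Dense (closure (E m))ᶜ := by
    intro m
    rw [dense_iff_inter_open]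
    intro V hV hVne
    -- find a small ball whose image-preimage trick kills E m
    have hpre : (f ⁻¹' V).Nonempty := by
      obtain ⟨v, hv⟩ := hVne
      obtain ⟨y, rfl⟩ := hsurj v
      exact ⟨y, hv⟩
    obtain ⟨y₀, hy₀⟩ := hpre
    obtain ⟨r₀, hr₀pos, hr₀⟩ := Metric.isOpen_iff.1 (hf.isOpen_preimage V hV) y₀ hy₀
    set r : ℝ := min r₀ (1 / (2 * ((m : ℝ) + 1))) with hr
    have hrpos : 0 < r := by
      apply lt_min hr₀pos
      positivity
    have hBsub : Metric.ball y₀ r ⊆ f ⁻¹' V :=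
      (Metric.ball_subset_ball (min_le_left _ _)).trans hr₀
    obtain ⟨W, hWo, hWne, hWpre, hWsub⟩ :=
      aux_W hf hmin Metric.isOpen_ball ⟨y₀, Metric.mem_ball_self hrpos⟩
    -- W ∩ E m = ∅
    have hWE : W ∩ E m = ∅ := by
      rw [eq_empty_iff_forall_notMem]
      rintro x ⟨hxW, y, z, hy, hz, hd⟩
      have hyB : y ∈ Metric.ball y₀ r := hWpre (by rw [mem_preimage, hy]; exact hxW)
      have hzB : z ∈ Metric.ball y₀ r := hWpre (by rw [mem_preimage, hz]; exact hxW)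
      have : dist y z < 2 * r := by
        calc dist y z ≤ dist y y₀ + dist z y₀ := dist_triangle_right _ _ _
        _ < r + r := by
            rw [Metric.mem_ball] at hyB hzB
            linarith [hyB, hzB]
        _ = 2 * r := by ring
      have h2r : 2 * r ≤ 1 / ((m : ℝ) + 1) := by
        have hle : r ≤ 1 / (2 * ((m : ℝ) + 1)) := min_le_right _ _
        have h2 : 2 * (1 / (2 * ((m : ℝ) + 1))) = 1 / ((m : ℝ) + 1) := by
          field_simp
        linarith
      linarith
    -- W ⊆ V
    have hWV : W ⊆ V := fun x hx => by
      obtain ⟨y, hyB, rfl⟩ := hWsub hx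
      exact hBsub hyB
    obtain ⟨w, hw⟩ := hWne
    refine ⟨w, hWV hw, fun hcl => ?_⟩
    have hne2 : (W ∩ E m).Nonempty := mem_closure_iff.1 hcl W hWo hw
    rw [hWE] at hne2
    exact hne2.ne_empty rfl
  -- now conclude
  have hsub : (⋂ m, (closure (E m))ᶜ) ⊆ {x : X | ∀ y z, f y = x → f z = x → y = z} := by
    intro x hx y z hy hz
    by_contra hyz
    have hd : 0 < dist y z := dist_pos.2 hyz
    obtain ⟨m, hm⟩ := exists_nat_one_div_lt hd
    have hxE : x ∈ E m := ⟨y, z, hy, hz, le_of_lt hm⟩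
    exact (mem_iInter.1 hx m) (subset_closure hxE)
  refine Filter.mem_of_superset ?_ hsub
  exact countable_iInter_mem.2 fun m =>
    residual_of_dense_open isClosed_closure.isOpen_compl (hEnd m)

end Aux

/-- Given a continuous minimal map `f` of a compact metric space with
homeo-part `H` and a residual set `P`, there is a residual set `R ⊆ P ∩ H` which is fully
invariant, on which `f` restricts to a bijection, and such that the forward and backward
orbits (within `R`) of every point of `R` are dense in `X`. -/
theorem exists_invariant_residual_subset_of_homeoPart
    {X : Type*} [MetricSpace X] [CompactSpace X]
    (f : X → X) (hf : Continuous f)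
    (hmin : ∀ x : X, Dense (Set.range fun n => f^[n] x))
    (P : Set X) (hP : P ∈ residual X) :
    ∃ R : Set X, R ⊆ P ∩ homeoPart f ∧ R ∈ residual X ∧
      f '' R = R ∧ f ⁻¹' R = R ∧ Set.BijOn f R R ∧
      (∀ x ∈ R, Dense (Set.range fun n => f^[n] x)) ∧
      (∀ x ∈ R, Dense {y | y ∈ R ∧ ∃ n : ℕ, f^[n] y = x}) := by
  classical
  rcases isEmpty_or_nonempty X with hX | hX
  · refine ⟨∅, empty_subset _, ?_, by simp, by simp, Set.bijOn_empty f,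
      fun x hx => absurd hx (notMem_empty x), fun x hx => absurd hx (notMem_empty x)⟩
    have h0 : (∅ : Set X) = univ := (Set.univ_eq_empty_iff.2 hX).symm
    rw [h0]
    exact Filter.univ_mem
  · have hsurj := aux_surj hf hmin
    set S : Set X := {x : X | ∀ y z, f y = x → f z = x → y = z} with hSdef
    have hSres : S ∈ residual X := aux_S_residual hf hmin
    set A : Set X := P ∩ S with hAdef
    have hAres : A ∈ residual X := Filter.inter_mem hP hSres
    have hpreit : ∀ n : ℕ, (f^[n]) ⁻¹' A ∈ residual X := by
      intro n
      induction n with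
      | zero => simpa using hAres
      | succ n ih =>
        rw [Function.iterate_succ, Set.preimage_comp]
        exact aux_preimage_residual hf hmin ih
    set B : Set X := ⋂ n : ℕ, (f^[n]) ⁻¹' A with hBdef
    have hBres : B ∈ residual X := countable_iInter_mem.2 hpreit
    have hBA : B ⊆ A := by
      intro x hx
      simpa using mem_iInter.1 hx 0
    have hBinv : ∀ x ∈ B, f x ∈ B := by
      intro x hx
      rw [hBdef, mem_iInter]
      intro n
      have h1 := mem_iInter.1 hx (n + 1)
      rw [mem_preimage, Function.iterate_succ_apply] at h1
      exact h1
    have himit : ∀ n : ℕ, (f^[n]) '' B ∈ residual X := by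
      intro n
      induction n with
      | zero => simpa using hBres
      | succ n ih =>
        rw [Function.iterate_succ', Set.image_comp]
        exact aux_image_residual hf hmin ih
    set R : Set X := ⋂ n : ℕ, (f^[n]) '' B with hRdef
    have hRres : R ∈ residual X := countable_iInter_mem.2 himit
    have hRB : R ⊆ B := by
      intro x hx
      simpa using mem_iInter.1 hx 0
    have hRS : R ⊆ S := fun x hx => (hBA (hRB hx)).2
    have hRP : R ⊆ P := fun x hx => (hBA (hRB hx)).1
    have hS' : ∀ x ∈ R, ∀ y z, f y = x → f z = x → y = z := fun x hx => hRS hx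
    have hfR : ∀ x ∈ R, f x ∈ R := by
      intro x hx
      rw [hRdef, mem_iInter]
      intro n
      match n with
      | 0 =>
        simpa using hBinv x (hRB hx)
      | Nat.succ n =>
        have hx' : x ∈ f^[n] '' B := mem_iInter.1 hx n
        rw [Function.iterate_succ', Set.image_comp]
        exact mem_image_of_mem f hx'
    have hback : ∀ x, x ∈ R → ∃ y, y ∈ R ∧ f y = x := by
      intro x hx
      have h0 : ∀ n : ℕ, ∃ y, y ∈ f^[n] '' B ∧ f y = x := by
        intro n
        have h1 : x ∈ f^[n + 1] '' B := mem_iInter.1 hx (n + 1)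
        rw [Function.iterate_succ', Set.image_comp] at h1
        obtain ⟨y, hy, hyx⟩ := h1
        exact ⟨y, hy, hyx⟩
      obtain ⟨y, hy0, hyx⟩ := h0 0
      refine ⟨y, ?_, hyx⟩
      rw [hRdef, mem_iInter]
      intro n
      obtain ⟨y', hy', hy'x⟩ := h0 n
      have he : y' = y := hS' x hx y' y hy'x hyx
      rwa [he] at hy'
    have hfim : f '' R = R := by
      apply Subset.antisymm
      · rintro _ ⟨x, hx, rfl⟩
        exact hfR x hx
      · intro x hx
        obtain ⟨y, hyR, hyx⟩ := hback x hx
        exact ⟨y, hyR, hyx⟩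
    have hfpre : f ⁻¹' R = R := by
      apply Subset.antisymm
      · intro y hy
        have hfyR : f y ∈ R := hy
        obtain ⟨y', hy'R, hy'x⟩ := hback (f y) hfyR
        have he : y' = y := hS' (f y) hfyR y' y hy'x rfl
        rwa [← he]
      · intro x hx
        exact hfR x hx
    have hbij : Set.BijOn f R R := by
      refine ⟨fun x hx => hfR x hx, ?_, ?_⟩
      · intro x hx y hy hxy
        exact hS' (f x) (hfR x hx) x y rfl hxy.symm
      · intro x hx
        obtain ⟨y, hyR, hyx⟩ := hback x hx
        exact ⟨y, hyR, hyx⟩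
    -- the backward choice map
    set g : X → X := fun x => if h : x ∈ R then (hback x h).choose else x with hgdef
    have hg1 : ∀ x ∈ R, g x ∈ R := by
      intro x hx
      simp only [hgdef, dif_pos hx]
      exact (hback x hx).choose_spec.1
    have hg2 : ∀ x ∈ R, f (g x) = x := by
      intro x hx
      simp only [hgdef, dif_pos hx]
      exact (hback x hx).choose_spec.2
    have hgk : ∀ x, x ∈ R → ∀ k : ℕ, g^[k] x ∈ R := by
      intro x hx k
      induction k with
      | zero => simpa using hx
      | succ k ih =>
        rw [Function.iterate_succ_apply']
        exact hg1 _ ih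
    have hfk : ∀ x, x ∈ R → ∀ k : ℕ, f^[k] x ∈ R := by
      intro x hx k
      induction k with
      | zero => simpa using hx
      | succ k ih =>
        rw [Function.iterate_succ_apply']
        exact hfR _ ih
    have hfgk : ∀ x, x ∈ R → ∀ k : ℕ, f^[k] (g^[k] x) = x := by
      intro x hx k
      induction k with
      | zero => simp
      | succ k ih =>
        have e1 : g^[k + 1] x = g (g^[k] x) := Function.iterate_succ_apply' g k x
        have e2 : f^[k + 1] (g (g^[k] x)) = f^[k] (f (g (g^[k] x))) :=
          Function.iterate_succ_apply f k _
        rw [e1, e2, hg2 _ (hgk x hx k), ih]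
    -- homeo-part membership
    have hH : ∀ x₀, x₀ ∈ R → x₀ ∈ homeoPart f := by
      intro x₀ hx₀
      set u : ℤ → X := fun n => if 0 ≤ n then f^[n.toNat] x₀ else g^[(-n).toNat] x₀ with hu
      have hupos : ∀ n : ℤ, 0 ≤ n → u n = f^[n.toNat] x₀ := fun n hn => if_pos hn
      have huneg : ∀ n : ℤ, n < 0 → u n = g^[(-n).toNat] x₀ := fun n hn => if_neg (by omega)
      have huR : ∀ n : ℤ, u n ∈ R := by
        intro n
        by_cases hn : 0 ≤ n
        · rw [hupos n hn]; exact hfk _ hx₀ _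
        · rw [huneg n (by omega)]; exact hgk _ hx₀ _
      have hu0 : u 0 = x₀ := by
        rw [hupos 0 le_rfl]
        simp
      have huchain : ∀ n : ℤ, f (u n) = u (n + 1) := by
        intro n
        by_cases hn : 0 ≤ n
        · rw [hupos n hn, hupos (n + 1) (by omega)]
          rw [← Function.iterate_succ_apply' f]
          congr 1
          omega
        · push_neg at hn
          have hk : 1 ≤ (-n).toNat := by omega
          have e1 : u n = g (g^[(-n).toNat - 1] x₀) := by
            rw [huneg n hn]
            conv_lhs => rw [show (-n).toNat = ((-n).toNat - 1) + 1 by omega]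
            exact Function.iterate_succ_apply' g _ x₀
          have e2 : f (u n) = g^[(-n).toNat - 1] x₀ := by
            rw [e1]
            exact hg2 _ (hgk _ hx₀ _)
          rw [e2]
          by_cases hn1 : n + 1 = 0
          · rw [hn1, hu0]
            have h3 : (-n).toNat - 1 = 0 := by omega
            rw [h3]
            simp
          · have hn1' : n + 1 < 0 := by omega
            rw [huneg _ hn1']
            congr 1
            omega
      refine ⟨u, hu0, huchain, ?_⟩
      apply Subset.antisymm
      · rintro y ⟨i, j, hij⟩
        have key : ∀ i : ℕ, ∀ y : X, f^[i] y = f^[j] x₀ → y = u ((j : ℤ) - i) := by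
          intro i
          induction i with
          | zero =>
            intro y hy
            simp only [Function.iterate_zero_apply] at hy
            rw [hy, hupos _ (by omega : (0:ℤ) ≤ (j : ℤ) - (0:ℕ))]
            have h5 : (((j : ℤ) - ((0:ℕ) : ℤ)).toNat) = j := by omega
            rw [h5]
          | succ i ih =>
            intro y hy
            rw [Function.iterate_succ_apply] at hy
            have hfy : f y = u ((j : ℤ) - i) := ih (f y) hy
            have hmem : u ((j : ℤ) - i) ∈ R := huR _
            have hpre : f (u ((j : ℤ) - i - 1)) = u ((j : ℤ) - i) := by
              have h4 := huchain ((j : ℤ) - i - 1)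
              rwa [show (j : ℤ) - i - 1 + 1 = (j : ℤ) - i by ring] at h4
            have he : y = u ((j : ℤ) - i - 1) := hS' _ hmem y _ hfy hpre
            rw [he]
            congr 1
            push_cast
            ring
        exact ⟨(j : ℤ) - i, (key i y hij).symm⟩
      · rintro _ ⟨n, rfl⟩
        by_cases hn : 0 ≤ n
        · exact ⟨0, n.toNat, by simp [hupos n hn]⟩
        · refine ⟨(-n).toNat, 0, ?_⟩
          rw [huneg n (by omega)]
          simp [hfgk x₀ hx₀]
    -- backward density
    have hbdense : ∀ x ∈ R, Dense {y | y ∈ R ∧ ∃ n : ℕ, f^[n] y = x} := by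
      intro x hx
      set T : ℕ → Set X := fun N => closure ((fun k => g^[k] x) '' Set.Ici N) with hT
      have hTclosed : ∀ N, IsClosed (T N) := fun N => isClosed_closure
      have hTne : ∀ N, (T N).Nonempty := fun N => ⟨g^[N] x, subset_closure ⟨N, le_refl N, rfl⟩⟩
      have hTanti : ∀ N, T (N + 1) ⊆ T N := fun N =>
        closure_mono (image_mono fun k hk => le_trans (Nat.le_succ N) hk)
      have hInt : (⋂ N, T N).Nonempty :=
        IsCompact.nonempty_iInter_of_sequence_nonempty_isCompact_isClosed T hTanti hTne
          (hTclosed 0).isCompact hTclosed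
      have hIinv : ∀ z ∈ ⋂ N, T N, f z ∈ ⋂ N, T N := by
        intro z hz
        rw [mem_iInter]
        intro N
        have hz1 : z ∈ T (N + 1) := mem_iInter.1 hz (N + 1)
        have h1 : f '' ((fun k => g^[k] x) '' Set.Ici (N + 1)) ⊆
            (fun k => g^[k] x) '' Set.Ici N := by
          rintro _ ⟨_, ⟨k, hk, rfl⟩, rfl⟩
          have hk' : N + 1 ≤ k := hk
          refine ⟨k - 1, by simp only [Set.mem_Ici]; omega, ?_⟩
          have e1 : g^[k] x = g (g^[k - 1] x) := by
            conv_lhs => rw [show k = (k - 1) + 1 by omega]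
            exact Function.iterate_succ_apply' g _ x
          simp only
          rw [e1, hg2 _ (hgk x hx _)]
        have h2 : f z ∈ closure (f '' ((fun k => g^[k] x) '' Set.Ici (N + 1))) :=
          image_closure_subset_closure_image hf (mem_image_of_mem f hz1)
        exact closure_mono h1 h2
      have huniv : (⋂ N, T N) = univ :=
        aux_closed_inv_eq_univ hmin (isClosed_iInter hTclosed) hInt hIinv
      rw [dense_iff_closure_eq]
      apply eq_univ_of_univ_subset
      rw [← huniv]
      refine subset_trans (iInter_subset T 0) ?_
      refine closure_minimal ?_ isClosed_closure
      rintro _ ⟨k, -, rfl⟩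
      exact subset_closure ⟨hgk x hx k, k, hfgk x hx k⟩
    exact ⟨R, fun x hx => ⟨hRP hx, hH x hx⟩, hRres, hfim, hfpre, hbij,
      fun x _ => hmin x, hbdense⟩
end

section
/- Let X be a compact metric space and f : X → X a continuous map. Suppose there exists a redundant open set for f, i.e. a nonempty open set G ⊆ X with f(G) ⊆ f(X \ G). Then the system (X, f) is not minimal. -/
open Set Topology

/-- If a continuous selfmap of a compact metric space has a redundant open set
(a nonempty open `G` with `f(G) ⊆ f(X \ G)`), then it is not minimal. -/
theorem not_minimal_of_redundant_open_set
    {X : Type*} [MetricSpace X] [CompactSpace X]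
    (f : X → X) (hf : Continuous f)
    (G : Set X) (hGne : G.Nonempty) (hGopen : IsOpen G)
    (hred : f '' G ⊆ f '' Gᶜ) :
    ¬ ∀ x : X, Dense (Set.range fun n => f^[n] x) := by
  intro hden
  -- f is surjective
  have hsurj : Function.Surjective f := by
    have hcl : IsClosed (Set.range f) := (isCompact_range hf).isClosed
    obtain ⟨x0⟩ : Nonempty X := ⟨hGne.choose⟩
    have hd : Dense (Set.range f) := by
      have hsub : (Set.range fun n => f^[n] (f x0)) ⊆ Set.range f := by
        rintro _ ⟨n, rfl⟩
        exact ⟨f^[n] x0, (Function.iterate_succ_apply' f n x0).symm.trans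
          (Function.iterate_succ_apply f n x0)⟩
      exact Dense.mono hsub (hden (f x0))
    have huniv : Set.range f = Set.univ := hcl.closure_eq ▸ hd.closure_eq
    exact Set.range_eq_univ.mp huniv
  -- f '' Gᶜ = univ
  have hGc : f '' Gᶜ = Set.univ := by
    apply Set.eq_univ_of_forall
    intro y
    obtain ⟨x, rfl⟩ := hsurj y
    by_cases hx : x ∈ G
    · exact hred ⟨x, hx, rfl⟩
    · exact ⟨x, hx, rfl⟩
  -- the nested sets
  set K : ℕ → Set X := fun n => {x | ∀ k ≤ n, f^[k] x ∈ Gᶜ} with hK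
  have hKclosed : ∀ n, IsClosed (K n) := by
    intro n
    have : K n = ⋂ k ∈ {k | k ≤ n}, (f^[k]) ⁻¹' Gᶜ := by
      ext x; simp [hK]
    rw [this]
    exact isClosed_biInter fun k _ => (hGopen.isClosed_compl).preimage (hf.iterate k)
  have hKanti : ∀ n, K (n + 1) ⊆ K n := fun n x hx k hk => hx k (hk.trans (Nat.le_succ n))
  have hKne : ∀ n, (K n).Nonempty := by
    intro n
    induction n with
    | zero =>
      have hGcne : Gᶜ.Nonempty := by
        rw [Set.nonempty_compl]
        intro hGuniv
        obtain ⟨g, hg⟩ := hGne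
        have hmem : f g ∈ f '' Gᶜ := hred ⟨g, hg, rfl⟩
        rw [hGuniv, Set.compl_univ, Set.image_empty] at hmem
        exact hmem
      obtain ⟨x, hx⟩ := hGcne
      exact ⟨x, fun k hk => by simpa [Nat.le_zero.mp hk] using hx⟩
    | succ n ih =>
      obtain ⟨y, hy⟩ := ih
      have : y ∈ f '' Gᶜ := hGc ▸ Set.mem_univ y
      obtain ⟨z, hz, hzy⟩ := this
      refine ⟨z, fun k hk => ?_⟩
      match k with
      | 0 => exact hz
      | (m + 1) =>
        rw [Function.iterate_succ_apply, hzy]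
        exact hy m (Nat.succ_le_succ_iff.mp hk)
  have hInter : (⋂ n, K n).Nonempty :=
    IsCompact.nonempty_iInter_of_sequence_nonempty_isCompact_isClosed K hKanti hKne
      ((hKclosed 0).isCompact) hKclosed
  obtain ⟨x, hx⟩ := hInter
  have horb : (Set.range fun n => f^[n] x) ⊆ Gᶜ := by
    rintro _ ⟨n, rfl⟩
    exact (Set.mem_iInter.mp hx n) n le_rfl
  have hclos : closure (Set.range fun n => f^[n] x) ⊆ Gᶜ :=
    closure_minimal horb hGopen.isClosed_compl
  obtain ⟨g, hg⟩ := hGne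
  have : g ∈ Gᶜ := hclos (by rw [(hden x).closure_eq]; trivial)
  exact this hg
end

section
/- Let X be a compact metric space and f : X → X a continuous map. Then f is minimal if and only if f is surjective and every backward orbit of every point of X is dense in X; that is, if and only if f(X) = X and for every sequence (x_n)_{n≥0} in X with f(x_{n+1}) = x_n for all n ≥ 0, the set {x_n : n ≥ 0} is dense in X. -/
open Set Topology

/-- A continuous selfmap of a compact metric space is minimal if and only if
it is surjective and every backward orbit of every point is dense. -/
theorem minimal_iff_surjective_and_backward_orbits_dense
    {X : Type*} [MetricSpace X] [CompactSpace X]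
    (f : X → X) (hf : Continuous f) :
    (∀ x : X, Dense (Set.range fun n => f^[n] x)) ↔
      (Function.Surjective f ∧
        ∀ x : ℕ → X, (∀ n : ℕ, f (x (n + 1)) = x n) → Dense (Set.range x)) := by
  constructor
  · intro hmin
    -- key: any nonempty closed invariant set is everything
    have key : ∀ A : Set X, IsClosed A → A.Nonempty → Set.MapsTo f A A → A = Set.univ := by
      intro A hA ⟨a, ha⟩ hmap
      have horb : Set.range (fun n => f^[n] a) ⊆ A := by
        rintro _ ⟨n, rfl⟩
        exact hmap.iterate n ha
      have hd : Dense A := (hmin a).mono horb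
      rw [← hA.closure_eq, hd.closure_eq]
    constructor
    · intro b
      have hcl : IsClosed (Set.range f) := (isCompact_range hf).isClosed
      have h := key (Set.range f) hcl ⟨f b, b, rfl⟩ (fun y _ => ⟨y, rfl⟩)
      have : b ∈ Set.range f := h ▸ Set.mem_univ b
      exact this
    · intro x hx
      set A : Set X := ⋂ N : ℕ, closure (x '' Set.Ici N) with hAdef
      have hAcl : IsClosed A := isClosed_iInter fun N => isClosed_closure
      have hAne : A.Nonempty := by
        apply IsCompact.nonempty_iInter_of_sequence_nonempty_isCompact_isClosed
        · intro i
          exact closure_mono (Set.image_mono fun m hm => le_trans (Nat.le_succ i) hm)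
        · intro i
          exact (Set.Nonempty.image x ⟨i, le_refl i⟩).closure
        · exact isClosed_closure.isCompact
        · intro i; exact isClosed_closure
      have hmap : Set.MapsTo f A A := by
        intro a ha
        rw [hAdef, Set.mem_iInter]
        intro N
        have ha' : a ∈ closure (x '' Set.Ici (N + 1)) := Set.mem_iInter.1 ha (N + 1)
        have h1 : f a ∈ closure (f '' (x '' Set.Ici (N + 1))) :=
          (image_closure_subset_closure_image hf) ⟨a, ha', rfl⟩
        refine closure_mono ?_ h1
        rintro _ ⟨_, ⟨m, hm, rfl⟩, rfl⟩
        have hm' : N + 1 ≤ m := hm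
        obtain ⟨k, rfl⟩ : ∃ k, m = k + 1 := ⟨m - 1, by omega⟩
        exact ⟨k, Set.mem_Ici.2 (by omega), (hx k).symm⟩
      have hU := key A hAcl hAne hmap
      have : A ⊆ closure (Set.range x) :=
        Set.iInter_subset_of_subset 0 (closure_mono (Set.image_subset_range x _))
      rw [hU] at this
      exact fun y => this (Set.mem_univ y)
  · rintro ⟨hsurj, hback⟩ x0
    set A : Set X := closure (Set.range fun n => f^[n] x0) with hAdef
    have hAcl : IsClosed A := isClosed_closure
    have hAcomp : IsCompact A := hAcl.isCompact
    have hAne : A.Nonempty := ⟨x0, subset_closure ⟨0, rfl⟩⟩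
    have hmap : Set.MapsTo f A A := by
      intro a ha
      have h1 : f a ∈ closure (f '' Set.range fun n => f^[n] x0) :=
        (image_closure_subset_closure_image hf) ⟨a, ha, rfl⟩
      refine closure_mono ?_ h1
      rintro _ ⟨_, ⟨n, rfl⟩, rfl⟩
      exact ⟨n + 1, Function.iterate_succ_apply' f n x0⟩
    set K : Set X := ⋂ n : ℕ, f^[n] '' A with hKdef
    have hcomp : ∀ n : ℕ, IsCompact (f^[n] '' A) := fun n => hAcomp.image (hf.iterate n)
    have hdec : ∀ n : ℕ, f^[n + 1] '' A ⊆ f^[n] '' A := by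
      intro n
      rw [Function.iterate_succ, Set.image_comp]
      exact Set.image_mono (Set.image_subset_iff.2 hmap)
    have hne : ∀ n : ℕ, (f^[n] '' A).Nonempty := fun n => hAne.image _
    have hKne : K.Nonempty :=
      IsCompact.nonempty_iInter_of_sequence_nonempty_isCompact_isClosed _
        hdec hne (hcomp 0) (fun n => (hcomp n).isClosed)
    -- every point of K has a preimage in K
    have hpre : ∀ a ∈ K, ∃ b ∈ K, f b = a := by
      intro a ha
      have hW : (⋂ n : ℕ, (f ⁻¹' {a}) ∩ (f^[n] '' A)).Nonempty := by
        apply IsCompact.nonempty_iInter_of_sequence_nonempty_isCompact_isClosed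
        · intro n; exact Set.inter_subset_inter_right _ (hdec n)
        · intro n
          have : a ∈ f^[n + 1] '' A := Set.mem_iInter.1 ha (n + 1)
          rw [Function.iterate_succ', Set.image_comp] at this
          obtain ⟨b, hb, hfb⟩ := this
          exact ⟨b, hfb, hb⟩
        · exact ((isClosed_singleton.preimage hf).inter (hcomp 0).isClosed).isCompact
        · intro n; exact (isClosed_singleton.preimage hf).inter (hcomp n).isClosed
      obtain ⟨b, hb⟩ := hW
      rw [Set.mem_iInter] at hb
      refine ⟨b, Set.mem_iInter.2 fun n => (hb n).2, (hb 0).1⟩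
    obtain ⟨a0, ha0⟩ := hKne
    -- build a backward orbit inside K
    choose g hg1 hg2 using hpre
    let step : {y : X // y ∈ K} → {y : X // y ∈ K} := fun p => ⟨g p.1 p.2, hg1 p.1 p.2⟩
    let seq : ℕ → {y : X // y ∈ K} := fun n => step^[n] ⟨a0, ha0⟩
    have hseq : ∀ n : ℕ, f ((seq (n + 1) : X)) = (seq n : X) := by
      intro n
      have h : seq (n + 1) = step (seq n) := Function.iterate_succ_apply' step n _
      rw [h]
      exact hg2 _ _
    have hdense := hback (fun n => (seq n : X)) hseq
    have hsub : Set.range (fun n => (seq n : X)) ⊆ A := by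
      rintro _ ⟨n, rfl⟩
      have : (seq n : X) ∈ K := (seq n).2
      have := Set.mem_iInter.1 this 0
      simpa using this
    have : Dense A := hdense.mono hsub
    rw [hAdef, dense_iff_closure_eq, closure_closure, ← dense_iff_closure_eq] at this
    exact this
end

section
/- Let X be a compact metric space and f : X → X a continuous minimal map. Then f is almost one-to-one: the set {x ∈ X : f⁻¹({x}) is a singleton} is a dense Gδ subset of X. -/
open Set Topology

/-- A continuous minimal map of a compact metric space is almost one-to-one:
the set of points with exactly one preimage is a dense Gδ set. -/
theorem minimal_map_almost_one_to_one
    {X : Type*} [MetricSpace X] [CompactSpace X]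
    (f : X → X) (hf : Continuous f)
    (hmin : ∀ x : X, Dense (Set.range fun n => f^[n] x)) :
    Dense {x : X | ∃! y : X, f y = x} ∧ IsGδ {x : X | ∃! y : X, f y = x} := by
  -- Surjectivity of f
  have hsurj : Function.Surjective f := by
    intro y
    have hcl : IsClosed (Set.range f) := (isCompact_range hf).isClosed
    have horb : Set.range (fun n => f^[n] (f y)) ⊆ Set.range f := by
      rintro _ ⟨n, rfl⟩
      exact ⟨f^[n] y, (Function.iterate_succ_apply' f n y).symm.trans
        (Function.iterate_succ_apply f n y)⟩
    have hd : Dense (Set.range f) := Dense.mono horb (hmin (f y))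
    have : y ∈ closure (Set.range f) := hd y
    rwa [hcl.closure_eq] at this
  -- Every point visits a nonempty open set within a uniformly bounded time
  have hvisit : ∀ U : Set X, IsOpen U → U.Nonempty →
      ∃ N : ℕ, ∀ x : X, ∃ n ≤ N, f^[n] x ∈ U := by
    intro U hU hUne
    have hcov : (Set.univ : Set X) ⊆ ⋃ n : ℕ, f^[n] ⁻¹' U := by
      intro x _
      obtain ⟨y, hyU, n, rfl⟩ := (hmin x).inter_open_nonempty U hU hUne
      exact mem_iUnion.mpr ⟨n, hyU⟩
    obtain ⟨t, ht⟩ := isCompact_univ.elim_finite_subcover (fun n => f^[n] ⁻¹' U)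
      (fun n => hU.preimage (hf.iterate n)) hcov
    refine ⟨t.sup id, fun x => ?_⟩
    have := ht (mem_univ x)
    simp only [mem_iUnion] at this
    obtain ⟨n, hnt, hn⟩ := this
    exact ⟨n, Finset.le_sup (f := id) hnt, hn⟩
  -- Irreducibility: no proper closed subset maps onto X
  have hirr : ∀ A : Set X, IsClosed A → f '' A = Set.univ → A = Set.univ := by
    intro A hA hfA
    by_contra hne
    have hU : (Aᶜ).Nonempty := Set.nonempty_compl.mpr hne
    obtain ⟨N, hN⟩ := hvisit Aᶜ hA.isOpen_compl hU
    have hchain : ∀ n : ℕ, ∀ x : X, ∃ y : X, f^[n] y = x ∧ ∀ k < n, f^[k] y ∈ A := by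
      intro n
      induction n with
      | zero => exact fun x => ⟨x, rfl, fun k hk => absurd hk (Nat.not_lt_zero k)⟩
      | succ n ih =>
        intro x
        have hx : x ∈ f '' A := hfA ▸ Set.mem_univ x
        obtain ⟨a, haA, hax⟩ := hx
        obtain ⟨y, hyn, hyk⟩ := ih a
        refine ⟨y, ?_, fun k hk => ?_⟩
        · rw [Function.iterate_succ_apply', hyn, hax]
        · rcases Nat.lt_succ_iff_lt_or_eq.mp hk with h | h
          · exact hyk k h
          · rw [h, hyn]; exact haA
    obtain ⟨x0, _⟩ := hU
    obtain ⟨y, -, hy⟩ := hchain (N + 1) x0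
    obtain ⟨n, hnN, hnU⟩ := hN y
    exact hnU (hy n (Nat.lt_succ_of_le hnN))
  -- The sets A ε
  have hopen : ∀ ε : ℝ,
      IsOpen {x : X | ∀ y1 y2 : X, f y1 = x → f y2 = x → dist y1 y2 < ε} := by
    intro ε
    rw [← isClosed_compl_iff]
    have heq : {x : X | ∀ y1 y2 : X, f y1 = x → f y2 = x → dist y1 y2 < ε}ᶜ
        = (fun p : X × X => f p.1) '' {p : X × X | f p.1 = f p.2 ∧ ε ≤ dist p.1 p.2} := by
      ext x
      simp only [mem_compl_iff, mem_setOf_eq, mem_image, Prod.exists, not_forall, not_lt]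
      constructor
      · rintro ⟨y1, y2, h1, h2, h3⟩
        exact ⟨y1, y2, ⟨h1.trans h2.symm, h3⟩, h1⟩
      · rintro ⟨y1, y2, ⟨he, hd⟩, rfl⟩
        exact ⟨y1, y2, rfl, he.symm, hd⟩
    rw [heq]
    have hK : IsCompact {p : X × X | f p.1 = f p.2 ∧ ε ≤ dist p.1 p.2} := by
      apply IsCompact.of_isClosed_subset isCompact_univ ?_ (subset_univ _)
      exact (isClosed_eq (hf.comp continuous_fst) (hf.comp continuous_snd)).inter
        (isClosed_le continuous_const continuous_dist)
    exact (hK.image (hf.comp continuous_fst)).isClosed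
  -- Density of A ε
  have hdense : ∀ ε : ℝ, 0 < ε →
      Dense {x : X | ∀ y1 y2 : X, f y1 = x → f y2 = x → dist y1 y2 < ε} := by
    intro ε hε
    rw [dense_iff_inter_open]
    intro V hV hVne
    by_contra hcon
    have hbig : ∀ x ∈ V, ∃ y1 y2 : X, f y1 = x ∧ f y2 = x ∧ ε ≤ dist y1 y2 := by
      intro x hx
      by_contra h
      push_neg at h
      exact hcon ⟨x, hx, fun y1 y2 h1 h2 => h y1 y2 h1 h2⟩
    obtain ⟨t, ht⟩ := isCompact_univ.elim_finite_subcover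
      (fun c : X => Metric.ball c (ε / 4)) (fun c => Metric.isOpen_ball)
      (fun x _ => mem_iUnion.mpr ⟨x, Metric.mem_ball_self (by linarith)⟩)
    obtain ⟨x0, hx0⟩ := hVne
    obtain ⟨y0, hy0⟩ := hsurj x0
    have hc := ht (mem_univ y0)
    simp only [mem_iUnion] at hc
    obtain ⟨c0, hc0t, hy0c⟩ := hc
    have hsur : f '' (f ⁻¹' V ∩ Metric.ball c0 (ε / 4))ᶜ = Set.univ := by
      apply eq_univ_of_forall
      intro x
      by_cases hxV : x ∈ V
      · obtain ⟨y1, y2, h1, h2, hd⟩ := hbig x hxV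
        by_cases hb1 : y1 ∈ Metric.ball c0 (ε / 4)
        · refine ⟨y2, fun hmem => ?_, h2⟩
          have hb2 : y2 ∈ Metric.ball c0 (ε / 4) := hmem.2
          have : dist y1 y2 < ε := by
            have d1 := Metric.mem_ball.mp hb1
            have d2 := Metric.mem_ball.mp hb2
            calc dist y1 y2 ≤ dist y1 c0 + dist c0 y2 := dist_triangle _ _ _
              _ < ε / 4 + ε / 4 := by rw [dist_comm c0 y2]; linarith
              _ < ε := by linarith
          linarith
        · exact ⟨y1, fun hmem => hb1 hmem.2, h1⟩
      · obtain ⟨y, hy⟩ := hsurj x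
        exact ⟨y, fun hmem => hxV (hy ▸ hmem.1), hy⟩
    have hAll := hirr _ (((hV.preimage hf).inter Metric.isOpen_ball).isClosed_compl) hsur
    have hy0mem : y0 ∈ (f ⁻¹' V ∩ Metric.ball c0 (ε / 4))ᶜ := hAll ▸ mem_univ y0
    exact hy0mem ⟨by rwa [mem_preimage, hy0], hy0c⟩
  -- The target set as a countable intersection
  have hSeq : {x : X | ∃! y : X, f y = x}
      = ⋂ n : ℕ, {x : X | ∀ y1 y2 : X, f y1 = x → f y2 = x → dist y1 y2 < 1 / (n + 1)} := by
    ext x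
    simp only [mem_setOf_eq, mem_iInter]
    constructor
    · rintro ⟨y, hy, hyu⟩ n y1 y2 h1 h2
      rw [hyu y1 h1, hyu y2 h2, dist_self]
      positivity
    · intro h
      obtain ⟨y, hy⟩ := hsurj x
      refine ⟨y, hy, fun y' hy' => ?_⟩
      by_contra hne
      have hd : 0 < dist y' y := dist_pos.mpr hne
      obtain ⟨n, hn⟩ := exists_nat_one_div_lt hd
      exact absurd (h n y' y hy' hy) (not_lt.mpr hn.le)
  rw [hSeq]
  constructor
  · exact dense_iInter_of_isOpen (fun n => hopen _) (fun n => hdense _ (by positivity))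
  · exact IsGδ.iInter fun n => (hopen _).isGδ
end
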